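/- Let A be an MPFS algorithm for OFA(S,1) on a metric space with |S| = k, let σ = r_1⋯r_k be a request sequence of full length k, let i be an index and s ∈ F_{i−1}(A) a server with s ≠ s_A(r_i;σ). Then there exist an index t* with i ≤ t* ≤ k − 1 and servers a_t, h_t for i ≤ t ≤ t* such that (1) F_t(A) ∖ F_t(H_{i,s}) = {a_t} and F_t(H_{i,s}) ∖ F_t(A) = {h_t} for each i ≤ t ≤ t*, and (2) F_t(A) = F_t(H_{i,s}) for each t with t* + 1 ≤ t ≤ k; moreover a_i = s and h_i = s_A(r_i;σ). -/

import Mathlib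

set_option linter.unusedSectionVars false


noncomputable section

namespace OFA

variable {X : Type*} [MetricSpace X] [DecidableEq X]

/-- Decrease the remaining capacity of server `m` by one. -/
def decCap (c : X → ℕ) (m : X) : X → ℕ := fun x => if x = m then c x - 1 else c x

/-- Remaining capacities after a list of matches. -/
def useCaps : (X → ℕ) → List X → (X → ℕ)
  | c, [] => c
  | c, m :: ms => useCaps (decCap c m) ms

/-- The set of servers that are still free. -/
def freeOf (S : Finset X) (c : X → ℕ) : Finset X := S.filter fun x => 0 < c x

/-- Run an algorithm given by a choice function `f` (mapping the position of the
current request and the current set of free servers to the chosen server)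
on a request sequence, producing the list of matched servers. -/
def runC (S : Finset X) (f : X → Finset X → X) : (X → ℕ) → List X → List X
  | _, [] => []
  | c, r :: rs => f r (freeOf S c) :: runC S f (decCap c (f r (freeOf S c))) rs

/-- Total cost incurred by the algorithm on a request sequence. -/
def algCost (S : Finset X) (f : X → Finset X → X) (c : X → ℕ) (σ : List X) : ℝ :=
  ((σ.zip (runC S f c σ)).map fun p => dist p.1 p.2).sum

def totalCap (S : Finset X) (c : X → ℕ) : ℕ := ∑ x ∈ S, c x

/-- A valid request sequence: at most as many requests as total capacity. -/
def ValidSeq (S : Finset X) (c : X → ℕ) (σ : List X) : Prop := σ.length ≤ totalCap S c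

/-- A valid (offline) assignment of requests to servers. -/
def ValidAssign (S : Finset X) (c : X → ℕ) (σ : List X) (m : ℕ → X) : Prop :=
  (∀ i < σ.length, m i ∈ S) ∧
  ∀ x ∈ S, ((List.range σ.length).filter fun i => m i = x).length ≤ c x

def assignCost (σ : List X) (m : ℕ → X) : ℝ :=
  ∑ i : Fin σ.length, dist (σ.get i) (m i)

/-- Cost of an optimal offline assignment. -/
def Opt (S : Finset X) (c : X → ℕ) (σ : List X) : ℝ :=
  sInf { t | ∃ m, ValidAssign S c σ m ∧ assignCost σ m = t }

/-- The set of servers still free after the first `t` matches of `ms`. -/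
def freeAfter (S : Finset X) (c : X → ℕ) (ms : List X) (t : ℕ) : Finset X :=
  S.filter fun x => (ms.take t).count x < c x

/-- A choice function is an MPFS algorithm if it is given by a family of linear
orders (priorities, encoded by an injective rank function) on the servers, one for
each request position, and selects the free server with the highest priority. -/
def IsMPFS (S : Finset X) (f : X → Finset X → X) : Prop :=
  ∃ rank : X → X → ℕ,
    (∀ r : X, Set.InjOn (rank r) (S : Set X)) ∧
    ∀ (r : X) (F : Finset X), F ⊆ S → F.Nonempty →
      f r F ∈ F ∧ ∀ y ∈ F, rank r (f r F) ≤ rank r y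

/-- The list of matches of the hybrid algorithm `H_{i,s}` (with `i` 1-indexed):
the first `i-1` requests are matched as by the algorithm, the `i`-th is matched
with `s`, and the rest are matched by the algorithm's choice function. -/
def hybridRun (S : Finset X) (f : X → Finset X → X) (c : X → ℕ)
    (σ : List X) (i : ℕ) (s : X) : List X :=
  runC S f c (σ.take (i-1)) ++
    s :: runC S f (decCap (useCaps c (runC S f c (σ.take (i-1)))) s) (σ.drop i)

/-- The data produced by the singleton-difference lemma for the hybrid `H_{i,s}`
(unit capacities): for `i ≤ t ≤ t*` the free sets of `A` and of `H_{i,s}` differ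
exactly by the singletons `{a t}` and `{h t}`, and they agree for `t ≥ t* + 1`. -/
def HybridData (S : Finset X) (f : X → Finset X → X) (σ : List X)
    (i : ℕ) (s : X) (tstar : ℕ) (a h : ℕ → X) : Prop :=
  i ≤ tstar ∧ tstar + 1 ≤ S.card ∧
  a i = s ∧ h i = (runC S f (fun _ => 1) σ).getD (i-1) s ∧
  (∀ t, i ≤ t → t ≤ tstar →
    freeAfter S (fun _ => 1) (runC S f (fun _ => 1) σ) t \
        freeAfter S (fun _ => 1) (hybridRun S f (fun _ => 1) σ i s) t = {a t} ∧
    freeAfter S (fun _ => 1) (hybridRun S f (fun _ => 1) σ i s) t \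
        freeAfter S (fun _ => 1) (runC S f (fun _ => 1) σ) t = {h t}) ∧
  ∀ t, tstar + 1 ≤ t →
    freeAfter S (fun _ => 1) (runC S f (fun _ => 1) σ) t =
      freeAfter S (fun _ => 1) (hybridRun S f (fun _ => 1) σ i s) t

lemma runC_length (S : Finset X) (f : X → Finset X → X) (c : X → ℕ) (σ : List X) :
    (runC S f c σ).length = σ.length := by
  induction σ generalizing c with
  | nil => rfl
  | cons r rs ih => simp [runC, ih]

lemma useCaps_apply (c : X → ℕ) (ms : List X) (x : X) :
    useCaps c ms x = c x - ms.count x := by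
  induction ms generalizing c with
  | nil => simp [useCaps]
  | cons m ms ih =>
    simp only [useCaps, ih, decCap]
    rcases eq_or_ne x m with h | h
    · subst h
      rw [List.count_cons_self, if_pos rfl]
      omega
    · rw [List.count_cons_of_ne h.symm, if_neg h]

lemma useCaps_append (c : X → ℕ) (l₁ l₂ : List X) :
    useCaps c (l₁ ++ l₂) = useCaps (useCaps c l₁) l₂ := by
  induction l₁ generalizing c with
  | nil => rfl
  | cons m ms ih => simp [useCaps, ih]

lemma freeAfter_eq (S : Finset X) (c : X → ℕ) (ms : List X) (t : ℕ) :
    freeAfter S c ms t = freeOf S (useCaps c (ms.take t)) := by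
  unfold freeAfter freeOf
  apply Finset.filter_congr
  intro x _
  simp only [useCaps_apply]
  constructor
  · intro h; omega
  · intro h; omega

lemma freeAfter_succ_one (S : Finset X) (ms : List X) (t : ℕ) (ht : t < ms.length) :
    freeAfter S (fun _ => 1) ms (t+1)
      = (freeAfter S (fun _ => 1) ms t).erase (ms[t]) := by
  have hc : ∀ x : X, (ms.take (t+1)).count x
      = (ms.take t).count x + if ms[t] = x then 1 else 0 := by
    intro x
    rw [List.take_succ, List.getElem?_eq_getElem ht, Option.toList_some,
      List.count_append, List.count_singleton']
  ext x
  simp only [freeAfter, Finset.mem_filter, Finset.mem_erase, hc]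
  constructor
  · rintro ⟨hxS, hlt⟩
    by_cases h : ms[t] = x
    · rw [if_pos h] at hlt; omega
    · rw [if_neg h] at hlt
      exact ⟨fun e => h e.symm, hxS, hlt⟩
  · rintro ⟨hx, hxS, hlt⟩
    refine ⟨hxS, ?_⟩
    rw [if_neg (fun e => hx e.symm)]
    omega

lemma freeAfter_stable (S : Finset X) (c : X → ℕ) (ms : List X) {t : ℕ} (h : ms.length ≤ t) :
    freeAfter S c ms t = freeAfter S c ms ms.length := by
  unfold freeAfter
  rw [List.take_of_length_le h, List.take_length]

lemma freeAfter_zero (S : Finset X) (ms : List X) :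
    freeAfter S (fun _ => 1) ms 0 = S := by
  simp [freeAfter]

lemma runC_getElem (S : Finset X) (f : X → Finset X → X) (c : X → ℕ) (σ : List X)
    (t : ℕ) (ht : t < σ.length) :
    (runC S f c σ)[t]'(by rw [runC_length]; exact ht)
      = f (σ[t]) (freeOf S (useCaps c ((runC S f c σ).take t))) := by
  induction σ generalizing c t with
  | nil => simp at ht
  | cons r rs ih =>
    cases t with
    | zero => simp [runC, useCaps]
    | succ t =>
      simp only [runC, List.getElem_cons_succ, List.take_succ_cons]
      rw [ih _ _ (by simpa using Nat.lt_of_succ_lt_succ ht)]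
      rfl

lemma runC_take (S : Finset X) (f : X → Finset X → X) (c : X → ℕ) (σ : List X) (m : ℕ) :
    runC S f c (σ.take m) = (runC S f c σ).take m := by
  induction σ generalizing c m with
  | nil => simp [runC]
  | cons r rs ih =>
    cases m with
    | zero => simp [runC]
    | succ m => simp [runC, ih]

lemma erase_sdiff_erase_same (G H : Finset X) (u : X) :
    G.erase u \ H.erase u = (G \ H).erase u := by
  ext x
  simp only [Finset.mem_sdiff, Finset.mem_erase]
  tauto

lemma erase_sdiff_erase_of_ne {F : Finset X} {a b : X} (hb : b ∈ F) (hab : a ≠ b) :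
    F.erase a \ F.erase b = {b} := by
  ext x
  simp only [Finset.mem_sdiff, Finset.mem_erase, Finset.mem_singleton]
  constructor
  · rintro ⟨⟨hxa, hxF⟩, hnot⟩
    by_contra hxb
    exact hnot ⟨hxb, hxF⟩
  · rintro rfl
    exact ⟨⟨hab.symm, hb⟩, fun h => h.1 rfl⟩

lemma coalesce_helper {G H : Finset X} {a h : X}
    (ha : G \ H = {a}) (hh : H \ G = {h}) :
    G.erase a = H.erase h := by
  have haG : a ∈ G ∧ a ∉ H := by
    have := ha ▸ Finset.mem_singleton_self a; exact Finset.mem_sdiff.mp this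
  have hhH : h ∈ H ∧ h ∉ G := by
    have := hh ▸ Finset.mem_singleton_self h; exact Finset.mem_sdiff.mp this
  have h1 : ∀ x : X, x ∈ G ∧ x ∉ H ↔ x = a := by
    intro x; rw [← Finset.mem_sdiff, ha, Finset.mem_singleton]
  have h2 : ∀ x : X, x ∈ H ∧ x ∉ G ↔ x = h := by
    intro x; rw [← Finset.mem_sdiff, hh, Finset.mem_singleton]
  ext x
  simp only [Finset.mem_erase]
  constructor
  · rintro ⟨hxa, hxG⟩
    have hxH : x ∈ H := by
      by_contra hxH
      exact hxa ((h1 x).mp ⟨hxG, hxH⟩)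
    exact ⟨fun e => hhH.2 (e ▸ hxG), hxH⟩
  · rintro ⟨hxh, hxH⟩
    have hxG : x ∈ G := by
      by_contra hxG
      exact hxh ((h2 x).mp ⟨hxH, hxG⟩)
    exact ⟨fun e => haG.2 (e ▸ hxH), hxG⟩

lemma shift_helper {G H : Finset X} {a h v : X}
    (ha : G \ H = {a}) (hh : H \ G = {h}) (hvG : v ∈ G) (hvH : v ∈ H) (hva : v ≠ a) :
    G.erase a \ H.erase v = {v} ∧ H.erase v \ G.erase a = {h} := by
  have haG : a ∈ G ∧ a ∉ H := by
    have := ha ▸ Finset.mem_singleton_self a; exact Finset.mem_sdiff.mp this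
  have hhH : h ∈ H ∧ h ∉ G := by
    have := hh ▸ Finset.mem_singleton_self h; exact Finset.mem_sdiff.mp this
  have h1 : ∀ x : X, x ∈ G ∧ x ∉ H ↔ x = a := by
    intro x; rw [← Finset.mem_sdiff, ha, Finset.mem_singleton]
  have h2 : ∀ x : X, x ∈ H ∧ x ∉ G ↔ x = h := by
    intro x; rw [← Finset.mem_sdiff, hh, Finset.mem_singleton]
  constructor
  · ext x
    simp only [Finset.mem_sdiff, Finset.mem_erase, Finset.mem_singleton]
    constructor
    · rintro ⟨⟨hxa, hxG⟩, hnot⟩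
      have hxH : x ∈ H := by
        by_contra hxH
        exact hxa ((h1 x).mp ⟨hxG, hxH⟩)
      by_contra hxv
      exact hnot ⟨hxv, hxH⟩
    · rintro rfl
      exact ⟨⟨hva, hvG⟩, fun hc => hc.1 rfl⟩
  · ext x
    simp only [Finset.mem_sdiff, Finset.mem_erase, Finset.mem_singleton]
    constructor
    · rintro ⟨⟨hxv, hxH⟩, hnot⟩
      have hxG : x ∉ G := by
        intro hxG
        exact hnot ⟨fun e => haG.2 (e ▸ hxH), hxG⟩
      exact (h2 x).mp ⟨hxH, hxG⟩
    · rintro rfl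
      exact ⟨⟨fun e => hhH.2 (e ▸ hvG), hhH.1⟩, fun hc => hhH.2 hc.2⟩

lemma freeAfter_card (S : Finset X) (ms : List X)
    (hsel : ∀ t, (ht : t < ms.length) → (freeAfter S (fun _ => 1) ms t).Nonempty →
      ms[t] ∈ freeAfter S (fun _ => 1) ms t) :
    ∀ t, t ≤ ms.length → t ≤ S.card →
      (freeAfter S (fun _ => 1) ms t).card = S.card - t := by
  intro t
  induction t with
  | zero => intro _ _; simp [freeAfter_zero]
  | succ t ih =>
    intro h1 h2
    have ht1 : t < ms.length := Nat.lt_of_succ_le h1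
    have ht2 : t < S.card := Nat.lt_of_succ_le h2
    have hc := ih (le_of_lt ht1) (le_of_lt ht2)
    have hne : (freeAfter S (fun _ => 1) ms t).Nonempty := by
      rw [← Finset.card_pos, hc]; omega
    have hmem := hsel t ht1 hne
    rw [freeAfter_succ_one S ms t ht1, Finset.card_erase_of_mem hmem, hc]
    omega

section Hybrid

variable (S : Finset X) (f : X → Finset X → X) (σ : List X) (i : ℕ) (s : X)

lemma hybrid_decomp :
    hybridRun S f (fun _ => 1) σ i s
      = ((runC S f (fun _ => 1) σ).take (i-1) ++ [s]) ++
        runC S f (decCap (useCaps (fun _ => 1) ((runC S f (fun _ => 1) σ).take (i-1))) s)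
          (σ.drop i) := by
  rw [hybridRun, runC_take]
  simp

lemma hybrid_part1_length (hik : i - 1 ≤ σ.length) :
    (((runC S f (fun _ => 1) σ).take (i-1)) ++ [s]).length = i - 1 + 1 := by
  simp only [List.length_append, List.length_take, List.length_cons, List.length_nil,
    runC_length]
  omega

lemma hybrid_length (hi : 1 ≤ i) (hik : i ≤ σ.length) :
    (hybridRun S f (fun _ => 1) σ i s).length = σ.length := by
  rw [hybrid_decomp]
  simp only [List.length_append, List.length_take, List.length_cons, List.length_nil,
    runC_length, List.length_drop]
  omega

lemma hybrid_take (t : ℕ) (ht : t ≤ i - 1) (hik : i - 1 ≤ σ.length) :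
    (hybridRun S f (fun _ => 1) σ i s).take t = (runC S f (fun _ => 1) σ).take t := by
  rw [hybrid_decomp]
  rw [List.take_append_of_le_length
    (by rw [hybrid_part1_length S f σ i s hik]; omega)]
  rw [List.take_append_of_le_length
    (by simp only [List.length_take, runC_length]; omega)]
  rw [List.take_take]
  congr 1
  omega

lemma hybrid_getElem_mid (hi : 1 ≤ i) (hik : i ≤ σ.length)
    (h' : i - 1 < (hybridRun S f (fun _ => 1) σ i s).length) :
    (hybridRun S f (fun _ => 1) σ i s)[i-1] = s := by
  have hlen : ((runC S f (fun _ => 1) σ).take (i-1)).length = i - 1 := by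
    simp only [List.length_take, runC_length]; omega
  rw [List.getElem_of_eq (hybrid_decomp S f σ i s), List.getElem_append_left
    (by rw [hybrid_part1_length S f σ i s (by omega)]; omega)]
  rw [List.getElem_append_right (by omega)]
  simp [hlen]

lemma hybrid_getElem_early (t : ℕ) (ht : t < i - 1) (hik : i - 1 ≤ σ.length)
    (h1 : t < (hybridRun S f (fun _ => 1) σ i s).length)
    (h2 : t < (runC S f (fun _ => 1) σ).length) :
    (hybridRun S f (fun _ => 1) σ i s)[t] = (runC S f (fun _ => 1) σ)[t] := by
  have hlen : ((runC S f (fun _ => 1) σ).take (i-1)).length = i - 1 := by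
    simp only [List.length_take, runC_length]; omega
  rw [List.getElem_of_eq (hybrid_decomp S f σ i s), List.getElem_append_left
    (by rw [hybrid_part1_length S f σ i s hik]; omega)]
  rw [List.getElem_append_left (by omega)]
  simp

lemma hybrid_getElem_late (t : ℕ) (hi : 1 ≤ i) (hit : i ≤ t) (ht : t < σ.length)
    (h1 : t < (hybridRun S f (fun _ => 1) σ i s).length) :
    (hybridRun S f (fun _ => 1) σ i s)[t]
      = f (σ[t]) (freeOf S (useCaps (fun _ => 1)
          ((hybridRun S f (fun _ => 1) σ i s).take t))) := by
  have hP1 : (((runC S f (fun _ => 1) σ).take (i-1)) ++ [s]).length = i - 1 + 1 :=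
    hybrid_part1_length S f σ i s (by omega)
  have hDlen : (σ.drop i).length = σ.length - i := by simp
  have hji : t - i < (σ.drop i).length := by omega
  have he1 : (hybridRun S f (fun _ => 1) σ i s)[t]
      = (runC S f (decCap (useCaps (fun _ => 1) ((runC S f (fun _ => 1) σ).take (i-1))) s)
          (σ.drop i))[t - i]'(by rw [runC_length]; omega) := by
    rw [List.getElem_of_eq (hybrid_decomp S f σ i s),
      List.getElem_append_right (by omega)]
    congr 1
    omega
  have he2 := runC_getElem S f
    (decCap (useCaps (fun _ => 1) ((runC S f (fun _ => 1) σ).take (i-1))) s)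
    (σ.drop i) (t - i) hji
  have he3 : (σ.drop i)[t - i]'hji = σ[t] := by
    rw [List.getElem_drop]
    congr 1
    omega
  have ht1 : (hybridRun S f (fun _ => 1) σ i s).take t
      = (((runC S f (fun _ => 1) σ).take (i-1)) ++ [s]) ++
        (runC S f (decCap (useCaps (fun _ => 1) ((runC S f (fun _ => 1) σ).take (i-1))) s)
          (σ.drop i)).take (t - i) := by
    rw [hybrid_decomp]
    rw [List.take_append, List.take_of_length_le (by omega), hP1]
    congr 2
    omega
  have ht2 : useCaps (fun _ => 1) ((hybridRun S f (fun _ => 1) σ i s).take t)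
      = useCaps (decCap (useCaps (fun _ => 1) ((runC S f (fun _ => 1) σ).take (i-1))) s)
          ((runC S f (decCap (useCaps (fun _ => 1) ((runC S f (fun _ => 1) σ).take (i-1))) s)
            (σ.drop i)).take (t - i)) := by
    rw [ht1, useCaps_append, useCaps_append]
    rfl
  rw [he1, he2, he3, ht2]

end Hybrid

/-- Abstract core: two sequences of finsets that start with a singleton
difference, evolve by erasing chosen elements (with a tie-breaking property),
and eventually coincide, differ by singletons up to some time `t*`. -/
lemma abstract_core (G H : ℕ → Finset X) (k i : ℕ) (s0 u0 : X)
    (hik : i + 1 ≤ k)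
    (hinit : G i \ H i = {s0} ∧ H i \ G i = {u0} ∧ s0 ≠ u0)
    (hstep : ∀ t, i ≤ t → t < k → ∃ u v, u ∈ G t ∧ v ∈ H t ∧
      G (t+1) = (G t).erase u ∧ H (t+1) = (H t).erase v ∧
      (u ∈ H t → v ∈ G t → u = v))
    (hstable : ∀ t, k ≤ t → G (t+1) = G t ∧ H (t+1) = H t)
    (hGHk : G k = H k) :
    ∃ tstar, ∃ a h : ℕ → X, i ≤ tstar ∧ tstar + 1 ≤ k ∧ a i = s0 ∧ h i = u0 ∧
      (∀ t, i ≤ t → t ≤ tstar → G t \ H t = {a t} ∧ H t \ G t = {h t}) ∧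
      (∀ t, tstar + 1 ≤ t → G t = H t) := by
  classical
  -- preservation of equality
  have heqpres : ∀ t, i ≤ t → G t = H t → G (t+1) = H (t+1) := by
    intro t hit hGH
    rcases lt_or_ge t k with htk | htk
    · obtain ⟨u, v, huG, hvH, hGe, hHe, hkey⟩ := hstep t hit htk
      have huv : u = v := hkey (hGH ▸ huG) (hGH ▸ hvH)
      rw [hGe, hHe, hGH, huv]
    · rw [(hstable t htk).1, (hstable t htk).2, hGH]
  -- preservation of the dichotomy
  have hdich : ∀ t, i ≤ t →
      (∃ a h : X, a ≠ h ∧ G t \ H t = {a} ∧ H t \ G t = {h}) →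
      (∃ a h : X, a ≠ h ∧ G (t+1) \ H (t+1) = {a} ∧ H (t+1) \ G (t+1) = {h}) ∨
        G (t+1) = H (t+1) := by
    rintro t hit ⟨a, h, hah, haGH, hhHG⟩
    have haG : a ∈ G t ∧ a ∉ H t := by
      have := haGH ▸ Finset.mem_singleton_self a; exact Finset.mem_sdiff.mp this
    have hhH : h ∈ H t ∧ h ∉ G t := by
      have := hhHG ▸ Finset.mem_singleton_self h; exact Finset.mem_sdiff.mp this
    rcases lt_or_ge t k with htk | htk
    · obtain ⟨u, v, huG, hvH, hGe, hHe, hkey⟩ := hstep t hit htk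
      by_cases huv : u = v
      · subst huv
        left
        have hua : u ∉ ({a} : Finset X) := by
          simp only [Finset.mem_singleton]
          intro e; exact haG.2 (e ▸ hvH)
        have huh : u ∉ ({h} : Finset X) := by
          simp only [Finset.mem_singleton]
          intro e; exact hhH.2 (e ▸ huG)
        refine ⟨a, h, hah, ?_, ?_⟩
        · rw [hGe, hHe, erase_sdiff_erase_same, haGH, Finset.erase_eq_of_notMem hua]
        · rw [hGe, hHe, erase_sdiff_erase_same, hhHG, Finset.erase_eq_of_notMem huh]
      · by_cases huH : u ∈ H t
        · have hvG : v ∉ G t := fun hvG => huv (hkey huH hvG)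
          have hv : v = h := by
            have : v ∈ H t \ G t := Finset.mem_sdiff.mpr ⟨hvH, hvG⟩
            rw [hhHG] at this; exact Finset.mem_singleton.mp this
          subst hv
          have hres := shift_helper hhHG haGH huH huG
            (fun e => hhH.2 (e ▸ huG))
          left
          refine ⟨a, u, fun e => haG.2 (e ▸ huH), ?_, ?_⟩
          · rw [hGe, hHe]; exact hres.2
          · rw [hGe, hHe]; exact hres.1
        · have hu : u = a := by
            have : u ∈ G t \ H t := Finset.mem_sdiff.mpr ⟨huG, huH⟩
            rw [haGH] at this; exact Finset.mem_singleton.mp this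
          subst hu
          by_cases hvG : v ∈ G t
          · have hres := shift_helper haGH hhHG hvG hvH
              (fun e => haG.2 (e ▸ hvH))
            left
            refine ⟨v, h, fun e => hhH.2 (e ▸ hvG), ?_, ?_⟩
            · rw [hGe, hHe]; exact hres.1
            · rw [hGe, hHe]; exact hres.2
          · have hv : v = h := by
              have : v ∈ H t \ G t := Finset.mem_sdiff.mpr ⟨hvH, hvG⟩
              rw [hhHG] at this; exact Finset.mem_singleton.mp this
            subst hv
            right
            rw [hGe, hHe]
            exact coalesce_helper haGH hhHG
    · left
      refine ⟨a, h, hah, ?_, ?_⟩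
      · rw [(hstable t htk).1, (hstable t htk).2]; exact haGH
      · rw [(hstable t htk).1, (hstable t htk).2]; exact hhHG
  -- the coalescing time
  have hQex : ∃ n, G (i+1+n) = H (i+1+n) := by
    refine ⟨k - (i+1), ?_⟩
    have he : i + 1 + (k - (i+1)) = k := by omega
    rw [he]; exact hGHk
  have hNspec : G (i+1+Nat.find hQex) = H (i+1+Nat.find hQex) := Nat.find_spec hQex
  have hNle : Nat.find hQex ≤ k - (i+1) := Nat.find_le (by
    have he : i + 1 + (k - (i+1)) = k := by omega
    rw [he]; exact hGHk)
  set N := Nat.find hQex with hN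
  -- the difference holds on [i, i+N]
  have hDif : ∀ n, n ≤ N →
      ∃ a h : X, a ≠ h ∧ G (i+n) \ H (i+n) = {a} ∧ H (i+n) \ G (i+n) = {h} := by
    intro n
    induction n with
    | zero => intro _; exact ⟨s0, u0, hinit.2.2, hinit.1, hinit.2.1⟩
    | succ n ih =>
      intro hn
      have hd := ih (by omega)
      rcases hdich (i + n) (by omega) hd with hd' | heq
      · have he : i + (n+1) = i + n + 1 := by omega
        rw [he]; exact hd'
      · exfalso
        have he : i + 1 + n = i + n + 1 := by omega
        rw [hN] at hn
        exact Nat.find_min hQex (show n < Nat.find hQex by omega) (he ▸ heq)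
  -- define a and h
  refine ⟨i + N, fun t => ((G t \ H t).toList.headD s0),
    fun t => ((H t \ G t).toList.headD s0), by omega, by omega, ?_, ?_, ?_, ?_⟩
  · show (G i \ H i).toList.headD s0 = s0
    rw [hinit.1, Finset.toList_singleton, List.headD_cons]
  · show (H i \ G i).toList.headD s0 = u0
    rw [hinit.2.1, Finset.toList_singleton, List.headD_cons]
  · intro t hit htN
    obtain ⟨a, h, hp, h1, h2⟩ := hDif (t - i) (by omega)
    have ht' : i + (t - i) = t := by omega
    rw [ht'] at h1 h2
    constructor
    · show G t \ H t = {(G t \ H t).toList.headD s0}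
      rw [h1, Finset.toList_singleton, List.headD_cons]
    · show H t \ G t = {(H t \ G t).toList.headD s0}
      rw [h2, Finset.toList_singleton, List.headD_cons]
  · intro t htt
    induction t, htt using Nat.le_induction with
    | base =>
      have he : i + N + 1 = i + 1 + N := by omega
      rw [he]; exact hNspec
    | succ t ht ih => exact heqpres t (by omega) ih

lemma getD_eq_getElem' (l : List X) (n : ℕ) (d : X) (h : n < l.length) :
    l.getD n d = l[n] := by
  rw [List.getD_eq_getElem?_getD, List.getElem?_eq_getElem h]
  rfl

/-- (Singleton-difference lemma.) For an MPFS algorithm with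
unit capacities and a full-length request sequence, the free-server sets of the
algorithm and of the hybrid `H_{i,s}` differ by exactly one server each up to
some time `t* ≤ k−1`, with `a_i = s` and `h_i = s_A(r_i;σ)`, and coincide
afterwards. -/
theorem singleton_difference
    {X : Type*} [MetricSpace X] [DecidableEq X]
    (S : Finset X) (f : X → Finset X → X) (hf : IsMPFS S f)
    (σ : List X) (hlen : σ.length = S.card)
    (i : ℕ) (hi : 1 ≤ i) (hik : i ≤ S.card)
    (s : X) (hfree : s ∈ freeAfter S (fun _ => 1) (runC S f (fun _ => 1) σ) (i-1))
    (hne : s ≠ (runC S f (fun _ => 1) σ).getD (i-1) s) :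
    ∃ tstar, ∃ a h : ℕ → X, HybridData S f σ i s tstar a h := by
  classical
  obtain ⟨rank, hinj, hsel⟩ := hf
  have hLlen : (runC S f (fun _ => 1) σ).length = σ.length := runC_length S f _ σ
  have hMlen : (hybridRun S f (fun _ => 1) σ i s).length = σ.length :=
    hybrid_length S f σ i s hi (by omega)
  have hsub : ∀ (ms : List X) (t : ℕ), freeAfter S (fun _ => 1) ms t ⊆ S := by
    intro ms t
    simp only [freeAfter]
    exact Finset.filter_subset _ _
  have hLget : ∀ t, (ht : t < σ.length) →
      (runC S f (fun _ => 1) σ)[t]'(by omega) =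
        f (σ[t]) (freeAfter S (fun _ => 1) (runC S f (fun _ => 1) σ) t) := by
    intro t ht
    rw [runC_getElem S f _ σ t ht, ← freeAfter_eq]
  have hselL : ∀ t, (ht : t < (runC S f (fun _ => 1) σ).length) →
      (freeAfter S (fun _ => 1) (runC S f (fun _ => 1) σ) t).Nonempty →
      (runC S f (fun _ => 1) σ)[t] ∈
        freeAfter S (fun _ => 1) (runC S f (fun _ => 1) σ) t := by
    intro t ht hne'
    have ht' : t < σ.length := by omega
    rw [hLget t ht']
    exact (hsel (σ[t]) _ (hsub _ _) hne').1
  have cardG : ∀ t, t ≤ S.card →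
      (freeAfter S (fun _ => 1) (runC S f (fun _ => 1) σ) t).card = S.card - t := by
    intro t ht
    exact freeAfter_card S _ hselL t (by omega) ht
  have hneG : ∀ t, t < S.card →
      (freeAfter S (fun _ => 1) (runC S f (fun _ => 1) σ) t).Nonempty := by
    intro t ht
    rw [← Finset.card_pos, cardG t (le_of_lt ht)]
    omega
  have hHeqG : ∀ t, t ≤ i - 1 →
      freeAfter S (fun _ => 1) (hybridRun S f (fun _ => 1) σ i s) t
        = freeAfter S (fun _ => 1) (runC S f (fun _ => 1) σ) t := by
    intro t ht
    rw [freeAfter_eq, freeAfter_eq, hybrid_take S f σ i s t ht (by omega)]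
  have hMget : ∀ t, i ≤ t → (ht : t < σ.length) →
      (hybridRun S f (fun _ => 1) σ i s)[t]'(by omega) =
        f (σ[t]) (freeAfter S (fun _ => 1) (hybridRun S f (fun _ => 1) σ i s) t) := by
    intro t hit ht
    rw [hybrid_getElem_late S f σ i s t hi hit ht (by omega), ← freeAfter_eq]
  have hselM : ∀ t, (ht : t < (hybridRun S f (fun _ => 1) σ i s).length) →
      (freeAfter S (fun _ => 1) (hybridRun S f (fun _ => 1) σ i s) t).Nonempty →
      (hybridRun S f (fun _ => 1) σ i s)[t]
        ∈ freeAfter S (fun _ => 1) (hybridRun S f (fun _ => 1) σ i s) t := by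
    intro t ht hne'
    have ht' : t < σ.length := by omega
    rcases lt_trichotomy t (i-1) with h1 | h1 | h1
    · rw [hybrid_getElem_early S f σ i s t h1 (by omega) (by omega) (by omega)]
      rw [hHeqG t (by omega)] at hne' ⊢
      rw [hLget t ht']
      exact (hsel (σ[t]) _ (hsub _ _) hne').1
    · subst h1
      rw [hybrid_getElem_mid S f σ i s hi (by omega) (by omega), hHeqG (i-1) le_rfl]
      exact hfree
    · have hit : i ≤ t := by omega
      rw [hMget t hit ht']
      exact (hsel (σ[t]) _ (hsub _ _) hne').1
  have cardH : ∀ t, t ≤ S.card →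
      (freeAfter S (fun _ => 1) (hybridRun S f (fun _ => 1) σ i s) t).card
        = S.card - t := by
    intro t ht
    exact freeAfter_card S _ hselM t (by omega) ht
  have hneH : ∀ t, t < S.card →
      (freeAfter S (fun _ => 1) (hybridRun S f (fun _ => 1) σ i s) t).Nonempty := by
    intro t ht
    rw [← Finset.card_pos, cardH t (le_of_lt ht)]
    omega
  -- initial data
  have hu0 : s ≠ (runC S f (fun _ => 1) σ)[i-1]'(by omega) := by
    rwa [getD_eq_getElem' _ _ _ (by omega)] at hne
  have hu0mem : (runC S f (fun _ => 1) σ)[i-1]'(by omega)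
      ∈ freeAfter S (fun _ => 1) (runC S f (fun _ => 1) σ) (i-1) :=
    hselL (i-1) (by omega) (hneG (i-1) (by omega))
  have hik1 : i + 1 ≤ S.card := by
    have h2 : 1 < (freeAfter S (fun _ => 1) (runC S f (fun _ => 1) σ) (i-1)).card :=
      Finset.one_lt_card.mpr ⟨s, hfree, _, hu0mem, hu0⟩
    rw [cardG (i-1) (by omega)] at h2
    omega
  have hi11 : i - 1 + 1 = i := by omega
  have hGi : freeAfter S (fun _ => 1) (runC S f (fun _ => 1) σ) i
      = (freeAfter S (fun _ => 1) (runC S f (fun _ => 1) σ) (i-1)).erase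
          ((runC S f (fun _ => 1) σ)[i-1]'(by omega)) := by
    have hx := freeAfter_succ_one S (runC S f (fun _ => 1) σ) (i-1) (by omega)
    exact ((congrArg (freeAfter S (fun _ => 1) (runC S f (fun _ => 1) σ)) hi11).symm.trans hx)
  have hHi : freeAfter S (fun _ => 1) (hybridRun S f (fun _ => 1) σ i s) i
      = (freeAfter S (fun _ => 1) (runC S f (fun _ => 1) σ) (i-1)).erase s := by
    have hx := freeAfter_succ_one S (hybridRun S f (fun _ => 1) σ i s) (i-1) (by omega)
    have hx' := (congrArg (freeAfter S (fun _ => 1) (hybridRun S f (fun _ => 1) σ i s))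
      hi11).symm.trans hx
    rw [hHeqG (i-1) le_rfl, hybrid_getElem_mid S f σ i s hi (by omega) (by omega)] at hx'
    exact hx'
  have hinit1 : freeAfter S (fun _ => 1) (runC S f (fun _ => 1) σ) i \
      freeAfter S (fun _ => 1) (hybridRun S f (fun _ => 1) σ i s) i = {s} := by
    rw [hGi, hHi]
    exact erase_sdiff_erase_of_ne hfree (fun e => hu0 e.symm)
  have hinit2 : freeAfter S (fun _ => 1) (hybridRun S f (fun _ => 1) σ i s) i \
      freeAfter S (fun _ => 1) (runC S f (fun _ => 1) σ) i
        = {(runC S f (fun _ => 1) σ)[i-1]'(by omega)} := by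
    rw [hGi, hHi]
    exact erase_sdiff_erase_of_ne hu0mem hu0
  -- the step data
  have hstep : ∀ t, i ≤ t → t < S.card → ∃ u v,
      u ∈ freeAfter S (fun _ => 1) (runC S f (fun _ => 1) σ) t ∧
      v ∈ freeAfter S (fun _ => 1) (hybridRun S f (fun _ => 1) σ i s) t ∧
      freeAfter S (fun _ => 1) (runC S f (fun _ => 1) σ) (t+1)
        = (freeAfter S (fun _ => 1) (runC S f (fun _ => 1) σ) t).erase u ∧
      freeAfter S (fun _ => 1) (hybridRun S f (fun _ => 1) σ i s) (t+1)
        = (freeAfter S (fun _ => 1) (hybridRun S f (fun _ => 1) σ i s) t).erase v ∧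
      (u ∈ freeAfter S (fun _ => 1) (hybridRun S f (fun _ => 1) σ i s) t →
        v ∈ freeAfter S (fun _ => 1) (runC S f (fun _ => 1) σ) t → u = v) := by
    intro t hit htk
    have htσ : t < σ.length := by omega
    refine ⟨(runC S f (fun _ => 1) σ)[t]'(by omega),
      (hybridRun S f (fun _ => 1) σ i s)[t]'(by omega), ?_, ?_, ?_, ?_, ?_⟩
    · exact hselL t (by omega) (hneG t htk)
    · exact hselM t (by omega) (hneH t htk)
    · exact freeAfter_succ_one S _ t (by omega)
    · exact freeAfter_succ_one S _ t (by omega)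
    · intro huH hvG
      have r1 : rank (σ[t]) ((runC S f (fun _ => 1) σ)[t]'(by omega))
          ≤ rank (σ[t]) ((hybridRun S f (fun _ => 1) σ i s)[t]'(by omega)) := by
        rw [hLget t htσ]
        exact (hsel (σ[t]) _ (hsub _ _) (hneG t htk)).2 _ hvG
      have r2 : rank (σ[t]) ((hybridRun S f (fun _ => 1) σ i s)[t]'(by omega))
          ≤ rank (σ[t]) ((runC S f (fun _ => 1) σ)[t]'(by omega)) := by
        rw [hMget t hit htσ]
        exact (hsel (σ[t]) _ (hsub _ _) (hneH t htk)).2 _ huH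
      exact hinj (σ[t])
        (Finset.mem_coe.mpr (hsub _ _ (hselL t (by omega) (hneG t htk))))
        (Finset.mem_coe.mpr (hsub _ _ (hselM t (by omega) (hneH t htk))))
        (le_antisymm r1 r2)
  have hstable : ∀ t, S.card ≤ t →
      freeAfter S (fun _ => 1) (runC S f (fun _ => 1) σ) (t+1)
        = freeAfter S (fun _ => 1) (runC S f (fun _ => 1) σ) t ∧
      freeAfter S (fun _ => 1) (hybridRun S f (fun _ => 1) σ i s) (t+1)
        = freeAfter S (fun _ => 1) (hybridRun S f (fun _ => 1) σ i s) t := by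
    intro t ht
    constructor
    · rw [freeAfter_stable S _ (runC S f (fun _ => 1) σ) (show (runC S f (fun _ => 1) σ).length ≤ t+1 by omega),
        freeAfter_stable S _ (runC S f (fun _ => 1) σ) (show (runC S f (fun _ => 1) σ).length ≤ t by omega)]
    · rw [freeAfter_stable S _ (hybridRun S f (fun _ => 1) σ i s) (show (hybridRun S f (fun _ => 1) σ i s).length ≤ t+1 by omega),
        freeAfter_stable S _ (hybridRun S f (fun _ => 1) σ i s) (show (hybridRun S f (fun _ => 1) σ i s).length ≤ t by omega)]
  have hGHk : freeAfter S (fun _ => 1) (runC S f (fun _ => 1) σ) S.card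
      = freeAfter S (fun _ => 1) (hybridRun S f (fun _ => 1) σ i s) S.card := by
    have h1 : (freeAfter S (fun _ => 1) (runC S f (fun _ => 1) σ) S.card).card = 0 := by
      rw [cardG S.card le_rfl]; omega
    have h2 : (freeAfter S (fun _ => 1) (hybridRun S f (fun _ => 1) σ i s) S.card).card = 0 := by
      rw [cardH S.card le_rfl]; omega
    rw [Finset.card_eq_zero] at h1 h2
    rw [h1, h2]
  obtain ⟨tstar, a, h, h1, h2, h3, h4, h5, h6⟩ :=
    abstract_core (fun t => freeAfter S (fun _ => 1) (runC S f (fun _ => 1) σ) t)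
      (fun t => freeAfter S (fun _ => 1) (hybridRun S f (fun _ => 1) σ i s) t)
      S.card i s ((runC S f (fun _ => 1) σ)[i-1]'(by omega)) hik1
      ⟨hinit1, hinit2, hu0⟩ hstep hstable hGHk
  refine ⟨tstar, a, h, ?_⟩
  unfold HybridData
  refine ⟨h1, h2, h3, ?_, h5, h6⟩
  rw [h4, getD_eq_getElem' _ _ _ (by omega)]

end OFA
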